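/- For a full-rank matrix A ∈ ℝ^{n×q} with n ≤ q (so AAᵀ is invertible), the subdifferential of the nuclear norm at A is the singleton {(AAᵀ)^{−1/2} A}. -/

import Mathlib

open scoped BigOperators
open Matrix Classical

open scoped ComplexOrder in
/-- The positive semidefinite square root of a positive semidefinite matrix
(the definition `Matrix.PosSemidef.sqrt` of the older Mathlib, since removed). -/
noncomputable def Matrix.PosSemidef.sqrt {m 𝕜 : Type*} [Fintype m] [DecidableEq m] [RCLike 𝕜]
    {A : Matrix m m 𝕜} (hA : A.PosSemidef) : Matrix m m 𝕜 :=
  (hA.1.eigenvectorUnitary : Matrix m m 𝕜) * diagonal ((↑) ∘ (√·) ∘ hA.1.eigenvalues) *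
    (star hA.1.eigenvectorUnitary : Matrix m m 𝕜)

/-- Nuclear norm of a real matrix: trace of the positive square root of `AAᵀ`
(i.e. the sum of the singular values). -/
noncomputable def nuclearNorm {n q : ℕ} (A : Matrix (Fin n) (Fin q) ℝ) : ℝ :=
  ((Matrix.posSemidef_self_mul_conjTranspose A).sqrt).trace

/-- `Z` is a subgradient of `f` at `E` (trace inner product). -/
def InSubdiff {n q : ℕ} (f : Matrix (Fin n) (Fin q) ℝ → ℝ)
    (E Z : Matrix (Fin n) (Fin q) ℝ) : Prop :=
  ∀ A, f A - f E ≥ ∑ i, ∑ j, Z i j * (A i j - E i j)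

open scoped MatrixOrder in
lemma Matrix.PosSemidef.sqrt_eq_cfc {n : ℕ} {A : Matrix (Fin n) (Fin n) ℝ} (hA : A.PosSemidef) :
    hA.sqrt = CFC.sqrt A := by
  have h0 : 0 ≤ A := hA.nonneg
  rw [CFC.sqrt_eq_real_sqrt A h0, cfcₙ_eq_cfc, hA.1.cfc_eq]
  rfl

open scoped MatrixOrder in
lemma Matrix.PosSemidef.posSemidef_sqrt {n : ℕ} {A : Matrix (Fin n) (Fin n) ℝ}
    (hA : A.PosSemidef) : hA.sqrt.PosSemidef := by
  rw [hA.sqrt_eq_cfc]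
  exact (CFC.sqrt_nonneg A).posSemidef

open scoped MatrixOrder in
lemma Matrix.PosSemidef.sqrt_mul_self {n : ℕ} {A : Matrix (Fin n) (Fin n) ℝ}
    (hA : A.PosSemidef) : hA.sqrt * hA.sqrt = A := by
  rw [hA.sqrt_eq_cfc]
  exact CFC.sqrt_mul_sqrt_self A hA.nonneg

open scoped MatrixOrder in
lemma Matrix.PosSemidef.eq_sqrt_of_sq_eq {n : ℕ} {A B : Matrix (Fin n) (Fin n) ℝ}
    (hA : A.PosSemidef) (hB : B.PosSemidef) (h : A ^ 2 = B) : A = hB.sqrt := by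
  rw [hB.sqrt_eq_cfc]
  exact (CFC.sqrt_unique (by rw [← h, pow_two]) hA.nonneg).symm

namespace SubdiffNuclearAux

lemma dot_self_nonneg' {m : ℕ} (x : Fin m → ℝ) : 0 ≤ x ⬝ᵥ x :=
  Finset.sum_nonneg fun _ _ => mul_self_nonneg _

lemma cs_dot {m : ℕ} (x y : Fin m → ℝ) :
    x ⬝ᵥ y ≤ Real.sqrt (x ⬝ᵥ x) * Real.sqrt (y ⬝ᵥ y) := by
  have h2 : (x ⬝ᵥ y)^2 ≤ (x ⬝ᵥ x) * (y ⬝ᵥ y) := by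
    simpa [dotProduct, sq] using Finset.sum_mul_sq_le_sq_mul_sq Finset.univ x y
  calc x ⬝ᵥ y ≤ |x ⬝ᵥ y| := le_abs_self _
    _ = Real.sqrt ((x ⬝ᵥ y)^2) := (Real.sqrt_sq_eq_abs _).symm
    _ ≤ Real.sqrt ((x ⬝ᵥ x) * (y ⬝ᵥ y)) := Real.sqrt_le_sqrt h2
    _ = _ := Real.sqrt_mul (dot_self_nonneg' x) _

lemma cs_eq {m : ℕ} {x y : Fin m → ℝ} (hx : x ⬝ᵥ x ≤ 1) (hy : y ⬝ᵥ y = 1)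
    (hxy : x ⬝ᵥ y = 1) : x = y := by
  have hsum : ∑ j, (x j - y j)^2 = x ⬝ᵥ x - 2*(x ⬝ᵥ y) + y ⬝ᵥ y := by
    simp only [dotProduct, ← Finset.sum_add_distrib, ← Finset.sum_sub_distrib,
      Finset.mul_sum]
    exact Finset.sum_congr rfl fun j _ => by ring
  have h0 : ∑ j, (x j - y j)^2 ≤ 0 := by rw [hsum, hy, hxy]; linarith
  have h0' : ∑ j, (x j - y j)^2 = 0 :=
    le_antisymm h0 (Finset.sum_nonneg fun j _ => sq_nonneg _)
  funext j
  have h1 := (Finset.sum_eq_zero_iff_of_nonneg (fun j _ => sq_nonneg (x j - y j))).mp h0' j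
    (Finset.mem_univ j)
  have h2 := pow_eq_zero_iff (n := 2) (by norm_num) |>.mp h1
  linarith [h2]

lemma trace_eq_sum_conj {m : ℕ} (U : Matrix (Fin m) (Fin m) ℝ)
    (hU : U ∈ Matrix.unitaryGroup (Fin m) ℝ) (C : Matrix (Fin m) (Fin m) ℝ) :
    C.trace = ∑ i, (fun k => U k i) ⬝ᵥ (C *ᵥ fun k => U k i) := by
  have h1 : U * star U = 1 := (Matrix.mem_unitaryGroup_iff).mp hU
  have h2 : C.trace = ((star U) * C * U).trace := by
    rw [Matrix.trace_mul_cycle, h1, Matrix.one_mul]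
  rw [h2]
  simp only [Matrix.trace, Matrix.diag, Matrix.mul_apply, Matrix.mulVec, dotProduct,
    Matrix.star_apply, star_trivial, Finset.sum_mul, Finset.mul_sum]
  refine Finset.sum_congr rfl fun i _ => ?_
  rw [Finset.sum_comm]
  exact Finset.sum_congr rfl fun k _ => Finset.sum_congr rfl fun l _ => by ring

variable {m : ℕ} {T : Matrix (Fin m) (Fin m) ℝ} (hH : T.IsHermitian)

lemma eigen_dot (i j : Fin m) :
    (⇑(hH.eigenvectorBasis i) : Fin m → ℝ) ⬝ᵥ ⇑(hH.eigenvectorBasis j)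
      = if i = j then 1 else 0 := by
  have := (orthonormal_iff_ite (𝕜 := ℝ)).mp hH.eigenvectorBasis.orthonormal i j
  rw [dotProduct_comm]
  simpa [PiLp.inner_apply, RCLike.inner_apply, dotProduct, starRingEnd_apply] using this

lemma trace_eq_sum_eigen (C : Matrix (Fin m) (Fin m) ℝ) :
    C.trace = ∑ i, (⇑(hH.eigenvectorBasis i) : Fin m → ℝ) ⬝ᵥ (C *ᵥ ⇑(hH.eigenvectorBasis i)) := by
  have h := trace_eq_sum_conj (hH.eigenvectorUnitary : Matrix (Fin m) (Fin m) ℝ)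
    hH.eigenvectorUnitary.2 C
  have hcol : ∀ i, (fun k => (hH.eigenvectorUnitary : Matrix (Fin m) (Fin m) ℝ) k i)
      = (⇑(hH.eigenvectorBasis i) : Fin m → ℝ) := fun i =>
    funext fun k => by simp [Matrix.IsHermitian.eigenvectorUnitary_apply]
  rw [h]
  exact Finset.sum_congr rfl fun i _ => by rw [hcol]

lemma dot_self_transpose_mulVec {n q : ℕ} (M : Matrix (Fin n) (Fin q) ℝ) (u : Fin n → ℝ) :
    (Mᵀ *ᵥ u) ⬝ᵥ (Mᵀ *ᵥ u) = u ⬝ᵥ ((M * Mᵀ) *ᵥ u) := by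
  rw [← Matrix.mulVec_mulVec, Matrix.dotProduct_mulVec, ← Matrix.mulVec_transpose,
    Matrix.transpose_transpose, dotProduct_comm]

lemma ip_le_nuclear {n q : ℕ} (Z B : Matrix (Fin n) (Fin q) ℝ)
    (hZ : ∀ u : Fin n → ℝ, (Zᵀ *ᵥ u) ⬝ᵥ (Zᵀ *ᵥ u) ≤ u ⬝ᵥ u) :
    (Z * Bᵀ).trace ≤ nuclearNorm B := by
  have hT := Matrix.posSemidef_self_mul_conjTranspose B
  set T := hT.sqrt with hTdef
  have hTpsd : T.PosSemidef := hT.posSemidef_sqrt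
  have hH : T.IsHermitian := hTpsd.1
  set v : Fin n → Fin n → ℝ := fun i => ⇑(hH.eigenvectorBasis i) with hv
  set μ : Fin n → ℝ := hH.eigenvalues with hμdef
  have hμ : ∀ i, 0 ≤ μ i := fun i => hT.posSemidef_sqrt.eigenvalues_nonneg i
  have hvnorm : ∀ i, v i ⬝ᵥ v i = 1 := fun i => by
    simpa using eigen_dot hH i i
  have heig : ∀ i, T *ᵥ v i = μ i • v i := fun i => hH.mulVec_eigenvectorBasis i
  have hTT : T * T = B * Bᵀ := hT.sqrt_mul_self
  have hnn : nuclearNorm B = ∑ i, μ i := by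
    show T.trace = _
    rw [trace_eq_sum_eigen hH T]
    exact Finset.sum_congr rfl fun i _ => by
      rw [heig i, dotProduct_smul, smul_eq_mul, hvnorm i, mul_one]
  have key : ∀ i, v i ⬝ᵥ ((Z * Bᵀ) *ᵥ v i) ≤ μ i := by
    intro i
    have h1 : v i ⬝ᵥ ((Z * Bᵀ) *ᵥ v i) = (Zᵀ *ᵥ v i) ⬝ᵥ (Bᵀ *ᵥ v i) := by
      rw [← Matrix.mulVec_mulVec, Matrix.dotProduct_mulVec, ← Matrix.mulVec_transpose]
    have hBv : (Bᵀ *ᵥ v i) ⬝ᵥ (Bᵀ *ᵥ v i) = μ i ^ 2 := by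
      rw [dot_self_transpose_mulVec, ← hTT, ← Matrix.mulVec_mulVec, heig i,
        Matrix.mulVec_smul, heig i, smul_smul, dotProduct_smul, smul_eq_mul,
        hvnorm i, mul_one, sq]
    have hZv : Real.sqrt ((Zᵀ *ᵥ v i) ⬝ᵥ (Zᵀ *ᵥ v i)) ≤ 1 := by
      have h := hZ (v i)
      rw [hvnorm i] at h
      calc Real.sqrt ((Zᵀ *ᵥ v i) ⬝ᵥ (Zᵀ *ᵥ v i)) ≤ Real.sqrt 1 := Real.sqrt_le_sqrt h
        _ = 1 := Real.sqrt_one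
    calc v i ⬝ᵥ ((Z * Bᵀ) *ᵥ v i) = (Zᵀ *ᵥ v i) ⬝ᵥ (Bᵀ *ᵥ v i) := h1
      _ ≤ Real.sqrt ((Zᵀ *ᵥ v i) ⬝ᵥ (Zᵀ *ᵥ v i)) * Real.sqrt ((Bᵀ *ᵥ v i) ⬝ᵥ (Bᵀ *ᵥ v i)) :=
          cs_dot _ _
      _ ≤ 1 * Real.sqrt (μ i ^ 2) := by
          rw [hBv]
          exact mul_le_mul_of_nonneg_right hZv (Real.sqrt_nonneg _)
      _ = μ i := by rw [one_mul, Real.sqrt_sq (hμ i)]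
  calc (Z * Bᵀ).trace = ∑ i, v i ⬝ᵥ ((Z * Bᵀ) *ᵥ v i) := trace_eq_sum_eigen hH _
    _ ≤ ∑ i, μ i := Finset.sum_le_sum fun i _ => key i
    _ = nuclearNorm B := hnn.symm

lemma sqrt_eq' {n : ℕ} {M C : Matrix (Fin n) (Fin n) ℝ} (hM : M.PosSemidef)
    (hC : C.PosSemidef) (h : C * C = M) : hM.sqrt = C :=
  (hC.eq_sqrt_of_sq_eq hM (by rw [pow_two, h])).symm

lemma psd_smul {n : ℕ} {M : Matrix (Fin n) (Fin n) ℝ} (hM : M.PosSemidef) {c : ℝ}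
    (hc : 0 ≤ c) : (c • M).PosSemidef := by
  refine Matrix.PosSemidef.of_dotProduct_mulVec_nonneg ?_ fun x => ?_
  · unfold Matrix.IsHermitian
    rw [Matrix.conjTranspose_smul, hM.1]
    simp
  · rw [Matrix.smul_mulVec, dotProduct_smul, smul_eq_mul]
    exact mul_nonneg hc (hM.dotProduct_mulVec_nonneg x)

lemma psd_vecMulVec {n : ℕ} (u : Fin n → ℝ) : (Matrix.vecMulVec u u).PosSemidef := by
  refine Matrix.PosSemidef.of_dotProduct_mulVec_nonneg ?_ fun x => ?_
  · ext i j
    simp [Matrix.conjTranspose_apply, Matrix.vecMulVec_apply, mul_comm]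
  · have h : (Matrix.vecMulVec u u) *ᵥ x = (u ⬝ᵥ x) • u := by
      ext i
      simp only [Matrix.mulVec, Matrix.vecMulVec_apply, dotProduct, Pi.smul_apply,
        smul_eq_mul, Finset.sum_mul]
      exact Finset.sum_congr rfl fun j _ => by ring
    rw [h, dotProduct_smul, smul_eq_mul]
    simp only [star_trivial]
    rw [dotProduct_comm]
    exact mul_self_nonneg _

lemma vecMulVec_sq {n : ℕ} (u : Fin n → ℝ) :
    (Matrix.vecMulVec u u) * (Matrix.vecMulVec u u) = (u ⬝ᵥ u) • Matrix.vecMulVec u u := by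
  ext i k
  simp only [Matrix.mul_apply, Matrix.vecMulVec_apply, Matrix.smul_apply,
    dotProduct, smul_eq_mul]
  rw [Finset.sum_mul]
  exact Finset.sum_congr rfl fun j _ => by ring

lemma trace_vecMulVec {n : ℕ} (u : Fin n → ℝ) : (Matrix.vecMulVec u u).trace = u ⬝ᵥ u := by
  simp [Matrix.trace, Matrix.diag, Matrix.vecMulVec_apply, dotProduct]

lemma nuclear_vecMulVec {n q : ℕ} (u : Fin n → ℝ) (v : Fin q → ℝ) :
    nuclearNorm (Matrix.vecMulVec u v) = Real.sqrt (u ⬝ᵥ u) * Real.sqrt (v ⬝ᵥ v) := by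
  have hBB : (Matrix.vecMulVec u v) * (Matrix.vecMulVec u v)ᴴ
      = (v ⬝ᵥ v) • Matrix.vecMulVec u u := by
    ext i k
    simp only [Matrix.mul_apply, Matrix.conjTranspose_apply, Matrix.vecMulVec_apply,
      star_trivial, Matrix.smul_apply, dotProduct, smul_eq_mul]
    rw [Finset.sum_mul]
    exact Finset.sum_congr rfl fun j _ => by ring
  set c : ℝ := Real.sqrt (v ⬝ᵥ v) * (Real.sqrt (u ⬝ᵥ u))⁻¹ with hc
  have hc0 : 0 ≤ c := mul_nonneg (Real.sqrt_nonneg _) (inv_nonneg.mpr (Real.sqrt_nonneg _))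
  have hM := Matrix.posSemidef_self_mul_conjTranspose (Matrix.vecMulVec u v)
  have huu0 : 0 ≤ u ⬝ᵥ u := dot_self_nonneg' u
  have hvv0 : 0 ≤ v ⬝ᵥ v := dot_self_nonneg' v
  have hsq : hM.sqrt = c • Matrix.vecMulVec u u := by
    refine sqrt_eq' hM (psd_smul (psd_vecMulVec u) hc0) ?_
    rw [hBB, smul_mul_smul_comm, vecMulVec_sq, smul_smul]
    by_cases hu : u ⬝ᵥ u = 0
    · have hu0 : u = 0 := dotProduct_self_eq_zero.mp hu
      subst hu0
      have h0 : Matrix.vecMulVec (0 : Fin n → ℝ) (0 : Fin n → ℝ)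
          = (0 : Matrix (Fin n) (Fin n) ℝ) := by
        ext i j
        simp [Matrix.vecMulVec_apply]
      rw [h0]
      simp
    · have hupos : 0 < u ⬝ᵥ u := lt_of_le_of_ne huu0 (Ne.symm hu)
      congr 1
      rw [hc]
      have h1 : √(v ⬝ᵥ v) * (√(u ⬝ᵥ u))⁻¹ * (√(v ⬝ᵥ v) * (√(u ⬝ᵥ u))⁻¹) * (u ⬝ᵥ u)
          = (√(v ⬝ᵥ v) * √(v ⬝ᵥ v)) * ((√(u ⬝ᵥ u) * √(u ⬝ᵥ u))⁻¹ * (u ⬝ᵥ u)) := by ring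
      rw [h1, Real.mul_self_sqrt hvv0, Real.mul_self_sqrt huu0,
        inv_mul_cancel₀ (ne_of_gt hupos), mul_one]
  show hM.sqrt.trace = _
  rw [hsq, Matrix.trace_smul, trace_vecMulVec, smul_eq_mul, hc]
  by_cases hu : u ⬝ᵥ u = 0
  · rw [hu, Real.sqrt_zero]
    simp
  · have hupos : 0 < u ⬝ᵥ u := lt_of_le_of_ne huu0 (Ne.symm hu)
    have h2 : (√(u ⬝ᵥ u))⁻¹ * (u ⬝ᵥ u) = √(u ⬝ᵥ u) := by
      rw [inv_mul_eq_div, Real.div_sqrt]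
    calc √(v ⬝ᵥ v) * (√(u ⬝ᵥ u))⁻¹ * (u ⬝ᵥ u) = √(v ⬝ᵥ v) * ((√(u ⬝ᵥ u))⁻¹ * (u ⬝ᵥ u)) := by ring
      _ = √(v ⬝ᵥ v) * √(u ⬝ᵥ u) := by rw [h2]
      _ = _ := mul_comm _ _

lemma nuclear_zero {n q : ℕ} : nuclearNorm (0 : Matrix (Fin n) (Fin q) ℝ) = 0 := by
  have hM := Matrix.posSemidef_self_mul_conjTranspose (0 : Matrix (Fin n) (Fin q) ℝ)
  have h : hM.sqrt = 0 := sqrt_eq' hM Matrix.PosSemidef.zero (by simp)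
  show hM.sqrt.trace = 0
  rw [h, Matrix.trace_zero]

lemma nuclear_double {n q : ℕ} (A : Matrix (Fin n) (Fin q) ℝ) :
    nuclearNorm (A + A) = 2 * nuclearNorm A := by
  have hA := Matrix.posSemidef_self_mul_conjTranspose A
  have hM := Matrix.posSemidef_self_mul_conjTranspose (A + A)
  have hsq : hM.sqrt = (2 : ℝ) • hA.sqrt := by
    refine sqrt_eq' hM (psd_smul hA.posSemidef_sqrt (by norm_num)) ?_
    rw [smul_mul_smul_comm, hA.sqrt_mul_self]
    rw [Matrix.conjTranspose_add, Matrix.add_mul, Matrix.mul_add]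
    ext i j
    simp only [Matrix.smul_apply, Matrix.add_apply, smul_eq_mul]
    ring
  show hM.sqrt.trace = 2 * hA.sqrt.trace
  rw [hsq, Matrix.trace_smul, smul_eq_mul]

lemma ip_eq_trace {n q : ℕ} (Z B : Matrix (Fin n) (Fin q) ℝ) :
    ∑ i, ∑ j, Z i j * B i j = (Z * Bᵀ).trace := by
  simp [Matrix.trace, Matrix.diag, Matrix.mul_apply, Matrix.transpose_apply]

end SubdiffNuclearAux
open SubdiffNuclearAux in
/-- For a full-rank `A ∈ ℝ^{n×q}` with `n ≤ q` (so `AAᵀ` invertible), the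
subdifferential of the nuclear norm at `A` is the singleton `{(AAᵀ)^{−1/2} A}`. -/
theorem subdiff_nuclearNorm {n q : ℕ} (hnq : n ≤ q)
    (A : Matrix (Fin n) (Fin q) ℝ)
    (hinv : IsUnit (A * Aᵀ).det) :
    {Z : Matrix (Fin n) (Fin q) ℝ | InSubdiff nuclearNorm A Z} =
      {((Matrix.posSemidef_self_mul_conjTranspose A).sqrt)⁻¹ * A} := by
  have hA := Matrix.posSemidef_self_mul_conjTranspose A
  set S : Matrix (Fin n) (Fin n) ℝ := hA.sqrt with hSdef
  have hSpsd : S.PosSemidef := hA.posSemidef_sqrt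
  have hSH : S.IsHermitian := hSpsd.1
  have hSS : S * S = A * Aᵀ := hA.sqrt_mul_self
  have hdet : IsUnit S.det := by
    have h : S.det * S.det = (A * Aᵀ).det := by rw [← Matrix.det_mul, hSS]
    rw [← h] at hinv
    exact isUnit_of_mul_isUnit_left hinv
  have hSinv : S⁻¹ * S = 1 := Matrix.nonsing_inv_mul S hdet
  have hSinv' : S * S⁻¹ = 1 := Matrix.mul_nonsing_inv S hdet
  have hST : Sᵀ = S := hSH
  have hSinvT : (S⁻¹)ᵀ = S⁻¹ := by rw [Matrix.transpose_nonsing_inv, hST]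
  set W : Matrix (Fin n) (Fin q) ℝ := S⁻¹ * A with hWdef
  have hWA : S * W = A := by rw [hWdef, ← Matrix.mul_assoc, hSinv', Matrix.one_mul]
  have hWT : Wᵀ = Aᵀ * S⁻¹ := by rw [hWdef, Matrix.transpose_mul, hSinvT]
  have hWWT : W * Wᵀ = 1 := by
    rw [hWdef, hWT]
    calc S⁻¹ * A * (Aᵀ * S⁻¹) = S⁻¹ * (A * Aᵀ) * S⁻¹ := by
          rw [Matrix.mul_assoc, Matrix.mul_assoc, Matrix.mul_assoc]
      _ = S⁻¹ * (S * S) * S⁻¹ := by rw [hSS]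
      _ = (S⁻¹ * S) * (S * S⁻¹) := by rw [Matrix.mul_assoc, Matrix.mul_assoc, Matrix.mul_assoc]
      _ = 1 := by rw [hSinv, hSinv', Matrix.one_mul]
  have hWop : ∀ u : Fin n → ℝ, (Wᵀ *ᵥ u) ⬝ᵥ (Wᵀ *ᵥ u) ≤ u ⬝ᵥ u := by
    intro u
    rw [dot_self_transpose_mulVec, hWWT, Matrix.one_mulVec]
  have hWAtr : (W * Aᵀ).trace = S.trace := by
    have h : W * Aᵀ = S := by
      rw [hWdef, Matrix.mul_assoc, ← hSS, ← Matrix.mul_assoc, hSinv, Matrix.one_mul]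
    rw [h]
  have hfA : nuclearNorm A = S.trace := rfl
  -- membership of W
  have hWmem : InSubdiff nuclearNorm A W := by
    intro B
    have hsplit : ∑ i, ∑ j, W i j * (B i j - A i j)
        = (W * Bᵀ).trace - (W * Aᵀ).trace := by
      rw [← ip_eq_trace, ← ip_eq_trace, ← Finset.sum_sub_distrib]
      refine Finset.sum_congr rfl fun i _ => ?_
      rw [← Finset.sum_sub_distrib]
      exact Finset.sum_congr rfl fun j _ => by ring
    have h1 : (W * Bᵀ).trace ≤ nuclearNorm B := ip_le_nuclear W B hWop
    rw [ge_iff_le, hsplit, hWAtr, ← hfA]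
    linarith
  -- uniqueness
  apply Set.eq_singleton_iff_unique_mem.mpr
  refine ⟨hWmem, ?_⟩
  intro Z hZ
  simp only [Set.mem_setOf_eq] at hZ
  -- ⟨Z, A⟩ = nuclearNorm A
  have hZA : (Z * Aᵀ).trace = S.trace := by
    have hge := hZ 0
    have hle := hZ (A + A)
    rw [nuclear_zero] at hge
    rw [nuclear_double] at hle
    have e1 : ∑ i, ∑ j, Z i j * ((0 : Matrix (Fin n) (Fin q) ℝ) i j - A i j)
        = -(Z * Aᵀ).trace := by
      rw [← ip_eq_trace, ← Finset.sum_neg_distrib]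
      refine Finset.sum_congr rfl fun i _ => ?_
      rw [← Finset.sum_neg_distrib]
      exact Finset.sum_congr rfl fun j _ => by simp
    have e2 : ∑ i, ∑ j, Z i j * ((A + A) i j - A i j) = (Z * Aᵀ).trace := by
      rw [← ip_eq_trace]
      refine Finset.sum_congr rfl fun i _ => Finset.sum_congr rfl fun j _ => by
        simp [Matrix.add_apply]
    rw [e1] at hge
    rw [e2] at hle
    rw [hfA] at hge hle
    linarith
  have hZB : ∀ B : Matrix (Fin n) (Fin q) ℝ, (Z * Bᵀ).trace ≤ nuclearNorm B := by
    intro B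
    have h := hZ B
    have hsplit : ∑ i, ∑ j, Z i j * (B i j - A i j)
        = (Z * Bᵀ).trace - (Z * Aᵀ).trace := by
      rw [← ip_eq_trace, ← ip_eq_trace, ← Finset.sum_sub_distrib]
      refine Finset.sum_congr rfl fun i _ => ?_
      rw [← Finset.sum_sub_distrib]
      exact Finset.sum_congr rfl fun j _ => by ring
    rw [hsplit, hZA, ← hfA] at h
    linarith
  -- operator norm bound
  have hZop : ∀ u : Fin n → ℝ, (Zᵀ *ᵥ u) ⬝ᵥ (Zᵀ *ᵥ u) ≤ u ⬝ᵥ u := by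
    intro u
    set y : Fin q → ℝ := Zᵀ *ᵥ u with hy
    have hip : (Z * (Matrix.vecMulVec u y)ᵀ).trace = y ⬝ᵥ y := by
      rw [← ip_eq_trace]
      have h1 : ∀ j, y j = ∑ i, Z i j * u i := by
        intro j
        simp [hy, Matrix.mulVec, dotProduct, Matrix.transpose_apply]
      calc ∑ i, ∑ j, Z i j * Matrix.vecMulVec u y i j
          = ∑ j, (∑ i, Z i j * u i) * y j := by
            rw [Finset.sum_comm]
            refine Finset.sum_congr rfl fun j _ => ?_
            rw [Finset.sum_mul]
            exact Finset.sum_congr rfl fun i _ => by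
              rw [Matrix.vecMulVec_apply]; ring
        _ = ∑ j, y j * y j := Finset.sum_congr rfl fun j _ => by rw [← h1 j]
        _ = y ⬝ᵥ y := rfl
    have h := hZB (Matrix.vecMulVec u y)
    rw [hip, nuclear_vecMulVec] at h
    by_cases hyy : y ⬝ᵥ y = 0
    · rw [hyy]; exact dot_self_nonneg' u
    · have hypos : 0 < y ⬝ᵥ y := lt_of_le_of_ne (dot_self_nonneg' y) (Ne.symm hyy)
      have hsy : 0 < Real.sqrt (y ⬝ᵥ y) := Real.sqrt_pos.mpr hypos
      have h2 : Real.sqrt (y ⬝ᵥ y) * Real.sqrt (y ⬝ᵥ y) ≤ Real.sqrt (u ⬝ᵥ u) * Real.sqrt (y ⬝ᵥ y) := by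
        rw [Real.mul_self_sqrt (dot_self_nonneg' y)]
        exact h
      have h3 : Real.sqrt (y ⬝ᵥ y) ≤ Real.sqrt (u ⬝ᵥ u) :=
        le_of_mul_le_mul_right h2 hsy
      calc y ⬝ᵥ y = Real.sqrt (y ⬝ᵥ y) * Real.sqrt (y ⬝ᵥ y) :=
            (Real.mul_self_sqrt (dot_self_nonneg' y)).symm
        _ ≤ Real.sqrt (u ⬝ᵥ u) * Real.sqrt (u ⬝ᵥ u) :=
            mul_le_mul h3 h3 (Real.sqrt_nonneg _) (Real.sqrt_nonneg _)
        _ = u ⬝ᵥ u := Real.mul_self_sqrt (dot_self_nonneg' u)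
  -- eigen decomposition of S
  set v : Fin n → Fin n → ℝ := fun i => ⇑(hSH.eigenvectorBasis i) with hv
  set lam : Fin n → ℝ := hSH.eigenvalues with hlam
  have hlam0 : ∀ i, 0 ≤ lam i := fun i => hSpsd.eigenvalues_nonneg i
  have hlampos : ∀ i, 0 < lam i := by
    intro i
    rcases (hlam0 i).eq_or_lt with h | h
    · exfalso
      have hd : S.det = ∏ j, lam j := by
        have := hSH.det_eq_prod_eigenvalues
        simpa using this
      have : S.det = 0 := by
        rw [hd]
        exact Finset.prod_eq_zero (Finset.mem_univ i) (by linarith : lam i = 0)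
      rw [this] at hdet
      simpa using hdet
    · exact h
  have hvnorm : ∀ i, v i ⬝ᵥ v i = 1 := fun i => by simpa using eigen_dot hSH i i
  have heig : ∀ i, S *ᵥ v i = lam i • v i := fun i => hSH.mulVec_eigenvectorBasis i
  set x : Fin n → Fin q → ℝ := fun i => Zᵀ *ᵥ v i with hx
  set w : Fin n → Fin q → ℝ := fun i => Wᵀ *ᵥ v i with hw
  have hw1 : ∀ i, w i ⬝ᵥ w i = 1 := by
    intro i
    rw [hw]
    rw [dot_self_transpose_mulVec, hWWT, Matrix.one_mulVec, hvnorm i]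
  have hx1 : ∀ i, x i ⬝ᵥ x i ≤ 1 := by
    intro i
    have := hZop (v i)
    rwa [hvnorm i] at this
  have hxw_le : ∀ i, x i ⬝ᵥ w i ≤ 1 := by
    intro i
    calc x i ⬝ᵥ w i ≤ Real.sqrt (x i ⬝ᵥ x i) * Real.sqrt (w i ⬝ᵥ w i) := cs_dot _ _
      _ ≤ Real.sqrt 1 * Real.sqrt 1 := by
          exact mul_le_mul (Real.sqrt_le_sqrt (hx1 i)) (by rw [hw1 i]) (Real.sqrt_nonneg _)
            (Real.sqrt_nonneg _)
      _ = 1 := by rw [Real.sqrt_one, mul_one]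
  have hAv : ∀ i, Aᵀ *ᵥ v i = lam i • w i := by
    intro i
    have hAT : Aᵀ = Wᵀ * S := by rw [← hWA, Matrix.transpose_mul, hST]
    rw [hAT, ← Matrix.mulVec_mulVec, heig i, Matrix.mulVec_smul]
  have htr : (Z * Aᵀ).trace = ∑ i, lam i * (x i ⬝ᵥ w i) := by
    rw [trace_eq_sum_eigen hSH]
    refine Finset.sum_congr rfl fun i _ => ?_
    rw [← Matrix.mulVec_mulVec, Matrix.dotProduct_mulVec, ← Matrix.mulVec_transpose,
      hAv i, dotProduct_smul, smul_eq_mul]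
  have htrS : S.trace = ∑ i, lam i := by
    rw [trace_eq_sum_eigen hSH S]
    exact Finset.sum_congr rfl fun i _ => by
      rw [heig i, dotProduct_smul, smul_eq_mul, hvnorm i, mul_one]
  have hxw : ∀ i, x i ⬝ᵥ w i = 1 := by
    have hsum : ∑ i, lam i * (1 - x i ⬝ᵥ w i) = 0 := by
      have : ∑ i, lam i * (1 - x i ⬝ᵥ w i) = ∑ i, lam i - ∑ i, lam i * (x i ⬝ᵥ w i) := by
        rw [← Finset.sum_sub_distrib]
        exact Finset.sum_congr rfl fun i _ => by ring
      rw [this, ← htrS, ← htr, hZA]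
      ring
    intro i
    have := (Finset.sum_eq_zero_iff_of_nonneg (fun i _ =>
      mul_nonneg (hlam0 i) (sub_nonneg.mpr (hxw_le i)))).mp hsum i (Finset.mem_univ i)
    have h2 : 1 - x i ⬝ᵥ w i = 0 := by
      rcases mul_eq_zero.mp this with h | h
      · exact absurd h (ne_of_gt (hlampos i))
      · exact h
    linarith
  have hcol : ∀ i, Zᵀ *ᵥ v i = Wᵀ *ᵥ v i := fun i => cs_eq (hx1 i) (hw1 i) (hxw i)
  -- conclude Z = W
  set U : Matrix (Fin n) (Fin n) ℝ := (hSH.eigenvectorUnitary : Matrix (Fin n) (Fin n) ℝ)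
    with hU
  have hUU : U * star U = 1 := (Matrix.mem_unitaryGroup_iff).mp hSH.eigenvectorUnitary.2
  have happ : ∀ (M : Matrix (Fin q) (Fin n) ℝ) (k : Fin q) (i : Fin n),
      (M * U) k i = (M *ᵥ v i) k := by
    intro M k i
    simp [Matrix.mul_apply, Matrix.mulVec, dotProduct, hU,
      Matrix.IsHermitian.eigenvectorUnitary_apply, hv]
  have hZU : Zᵀ * U = Wᵀ * U := by
    ext k i
    rw [happ, happ, hcol i]
  have hZW : Zᵀ = Wᵀ := by
    calc Zᵀ = Zᵀ * (U * star U) := by rw [hUU, Matrix.mul_one]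
      _ = (Zᵀ * U) * star U := by rw [Matrix.mul_assoc]
      _ = (Wᵀ * U) * star U := by rw [hZU]
      _ = Wᵀ * (U * star U) := by rw [Matrix.mul_assoc]
      _ = Wᵀ := by rw [hUU, Matrix.mul_one]
  have : Z = W := by
    have := congrArg Matrix.transpose hZW
    rwa [Matrix.transpose_transpose, Matrix.transpose_transpose] at this
  exact this
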